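/- The number of Catalan alternative tableaux of size n is the Catalan number C_{n+1} = (1/(n+2)) · binomial(2n+2, n+1). -/

import Mathlib

/-! Letters: `none` = row (T step); `some none` = free column; `some (some d)` = column
with red arc to position `i + d + 1`. -/
abbrev Lam := Option (Option ℕ)

/-- Validity of a full (K-)configuration. -/
def GoodK (l : List Lam) : Prop :=
  ∀ i d, l[i]? = some (some (some d)) →
    l[i + d + 1]? = some none ∧
    ∀ j e, i < j → j < i + d + 1 → l[j]? = some (some e) →
      ∃ d', e = some d' ∧ j + d' + 1 ≤ i + d + 1

/-- Validity of a configuration sitting inside an arc whose closing row is the virtual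
position `l.length`: every column is matched, targets are `≤ l.length`. -/
def GoodP (l : List Lam) : Prop :=
  ∀ i e, l[i]? = some (some e) →
    ∃ d, e = some d ∧ i + d + 1 ≤ l.length ∧
      (i + d + 1 < l.length → l[i + d + 1]? = some none) ∧
      ∀ j e', i < j → j < i + d + 1 → l[j]? = some (some e') →
        ∃ d', e' = some d' ∧ j + d' + 1 ≤ i + d + 1

/-- Common consequence of `GoodK`/`GoodP`. -/
def GoodNest (l : List Lam) : Prop :=
  ∀ i d, l[i]? = some (some (some d)) →
    (i + d + 1 < l.length → l[i + d + 1]? = some none) ∧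
    ∀ j e, i < j → j < i + d + 1 → l[j]? = some (some e) →
      ∃ d', e = some d' ∧ j + d' + 1 ≤ i + d + 1

theorem GoodK.nest {l : List Lam} (h : GoodK l) : GoodNest l := by
  intro i d hi
  obtain ⟨h1, h2⟩ := h i d hi
  exact ⟨fun _ => h1, h2⟩

theorem GoodP.nest {l : List Lam} (h : GoodP l) : GoodNest l := by
  intro i d hi
  obtain ⟨d', hd', _, h1, h2⟩ := h i _ hi
  obtain rfl : d = d' := by injection hd'
  exact ⟨h1, h2⟩

theorem GoodK.drop {l : List Lam} (h : GoodK l) (m : ℕ) : GoodK (l.drop m) := by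
  intro i d hi
  rw [List.getElem?_drop] at hi
  obtain ⟨h1, h2⟩ := h (m + i) d hi
  constructor
  · rw [List.getElem?_drop, ← Nat.add_assoc, ← Nat.add_assoc]; exact h1
  · intro j e hj1 hj2 hje
    rw [List.getElem?_drop] at hje
    have := h2 (m + j) e (by omega) (by omega) hje
    obtain ⟨d', rfl, hle⟩ := this
    exact ⟨d', rfl, by omega⟩

theorem GoodP.drop {l : List Lam} (h : GoodP l) (m : ℕ) : GoodP (l.drop m) := by
  intro i e hi
  rw [List.getElem?_drop] at hi
  obtain ⟨d, rfl, hlen, h1, h2⟩ := h (m + i) _ hi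
  have hm : m + i < l.length := by
    by_contra hc
    rw [List.getElem?_eq_none (by omega)] at hi; exact nomatch hi
  refine ⟨d, rfl, by rw [List.length_drop]; omega, ?_, ?_⟩
  · intro hlt
    rw [List.getElem?_drop, ← Nat.add_assoc, ← Nat.add_assoc]
    exact h1 (by rw [List.length_drop] at hlt; omega)
  · intro j e' hj1 hj2 hje
    rw [List.getElem?_drop] at hje
    obtain ⟨d', rfl, hle⟩ := h2 (m + j) e' (by omega) (by omega) hje
    exact ⟨d', rfl, by omega⟩

/-- Taking an initial segment that is entirely "inside an arc" yields a `GoodP` list. -/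
theorem goodP_take {l : List Lam} (hn : GoodNest l) (d : ℕ) (hd : d ≤ l.length)
    (H1 : ∀ j e, j < d → l[j]? = some (some e) → ∃ d', e = some d' ∧ j + d' + 1 ≤ d) :
    GoodP (l.take d) := by
  have hlen : (l.take d).length = d := by rw [List.length_take]; omega
  intro i e hi
  have hid : i < d := by
    by_contra hc
    rw [List.getElem?_take_eq_none (by omega)] at hi; exact nomatch hi
  rw [List.getElem?_take_of_lt hid] at hi
  obtain ⟨d', rfl, hle⟩ := H1 i e hid hi
  obtain ⟨g1, g2⟩ := hn i d' hi
  refine ⟨d', rfl, by omega, ?_, ?_⟩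
  · intro hlt
    rw [hlen] at hlt
    rw [List.getElem?_take_of_lt hlt]
    exact g1 (by omega)
  · intro j e' hj1 hj2 hje
    rw [List.getElem?_take_of_lt (by omega)] at hje
    exact g2 j e' hj1 hj2 hje

/-- Grammar for configurations inside an arc (`P`-configurations). -/
inductive PC : Type
  | nil : PC
  | row (p : PC) : PC
  | virt (p : PC) : PC
  | arc (p₁ p₂ : PC) : PC

namespace PC

def size : PC → ℕ
  | nil => 0
  | row p => p.size + 1
  | virt p => p.size + 1
  | arc p₁ p₂ => p₁.size + p₂.size + 2

def decode : PC → List Lam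
  | nil => []
  | row p => none :: p.decode
  | virt p => some (some p.size) :: p.decode
  | arc p₁ p₂ => some (some p₁.size) :: (p₁.decode ++ none :: p₂.decode)

theorem length_decode : ∀ p : PC, p.decode.length = p.size
  | nil => rfl
  | row p => by simp [decode, size, length_decode p]
  | virt p => by simp [decode, size, length_decode p]
  | arc p₁ p₂ => by simp [decode, size, length_decode p₁, length_decode p₂]; omega

end PC

/-- Grammar for full configurations. -/
inductive KC : Type
  | nil : KC
  | row (k : KC) : KC
  | free (k : KC) : KC
  | block (p : PC) (k : KC) : KC

namespace KC

def size : KC → ℕ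
  | nil => 0
  | row k => k.size + 1
  | free k => k.size + 1
  | block p k => p.size + k.size + 2

def decode : KC → List Lam
  | nil => []
  | row k => none :: k.decode
  | free k => some none :: k.decode
  | block p k => some (some p.size) :: (p.decode ++ none :: k.decode)

theorem length_decode : ∀ k : KC, k.decode.length = k.size
  | nil => rfl
  | row k => by simp [decode, size, length_decode k]
  | free k => by simp [decode, size, length_decode k]
  | block p k => by simp [decode, size, PC.length_decode p, length_decode k]; omega

end KC

section Compose

variable {l l₁ l₂ : List Lam}

theorem goodK_cons {x : Lam} (hx : ∀ d : ℕ, x ≠ some (some d)) (h : GoodK l) :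
    GoodK (x :: l) := by
  intro i d hi
  match i with
  | 0 =>
    rw [List.getElem?_cons_zero] at hi
    exact absurd (by injection hi) (hx d)
  | i + 1 =>
    rw [List.getElem?_cons_succ] at hi
    obtain ⟨h1, h2⟩ := h i d hi
    refine ⟨?_, ?_⟩
    · have : i + 1 + d + 1 = (i + d + 1) + 1 := by omega
      rw [this, List.getElem?_cons_succ]; exact h1
    · intro j e hj1 hj2 hje
      match j with
      | 0 => omega
      | j + 1 =>
        rw [List.getElem?_cons_succ] at hje
        obtain ⟨d', rfl, hle⟩ := h2 j e (by omega) (by omega) hje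
        exact ⟨d', rfl, by omega⟩

theorem goodP_cons_row (h : GoodP l) : GoodP (none :: l) := by
  intro i e hi
  match i with
  | 0 => rw [List.getElem?_cons_zero] at hi; exact absurd (by injection hi) (by simp)
  | i + 1 =>
    rw [List.getElem?_cons_succ] at hi
    obtain ⟨d, rfl, hlen, h1, h2⟩ := h i e hi
    refine ⟨d, rfl, by simp; omega, ?_, ?_⟩
    · intro hlt
      have : i + 1 + d + 1 = (i + d + 1) + 1 := by omega
      rw [this, List.getElem?_cons_succ]
      exact h1 (by simp at hlt; omega)
    · intro j e' hj1 hj2 hje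
      match j with
      | 0 => omega
      | j + 1 =>
        rw [List.getElem?_cons_succ] at hje
        obtain ⟨d', rfl, hle⟩ := h2 j e' (by omega) (by omega) hje
        exact ⟨d', rfl, by omega⟩

theorem goodP_cons_virt (h : GoodP l) : GoodP (some (some l.length) :: l) := by
  intro i e hi
  match i with
  | 0 =>
    rw [List.getElem?_cons_zero] at hi
    simp only [Option.some.injEq] at hi
    subst hi
    refine ⟨l.length, rfl, by simp, by intro hlt; simp at hlt, ?_⟩
    intro j e' hj1 hj2 hje
    match j with
    | 0 => omega
    | j + 1 =>
      rw [List.getElem?_cons_succ] at hje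
      obtain ⟨d', rfl, hle, _, _⟩ := h j e' hje
      exact ⟨d', rfl, by omega⟩
  | i + 1 =>
    rw [List.getElem?_cons_succ] at hi
    obtain ⟨d, rfl, hlen, h1, h2⟩ := h i e hi
    refine ⟨d, rfl, by simp; omega, ?_, ?_⟩
    · intro hlt
      have : i + 1 + d + 1 = (i + d + 1) + 1 := by omega
      rw [this, List.getElem?_cons_succ]
      exact h1 (by simp at hlt; omega)
    · intro j e' hj1 hj2 hje
      match j with
      | 0 => omega
      | j + 1 =>
        rw [List.getElem?_cons_succ] at hje
        obtain ⟨d', rfl, hle⟩ := h2 j e' (by omega) (by omega) hje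
        exact ⟨d', rfl, by omega⟩

/-! getElem? facts for `x :: (l₁ ++ none :: l₂)`. -/

theorem getB (x : Lam) : (x :: (l₁ ++ none :: l₂))[l₁.length + 1]? = some none := by
  rw [List.getElem?_cons_succ, List.getElem?_append_right (le_refl _), Nat.sub_self,
    List.getElem?_cons_zero]

theorem getA (x : Lam) {j : ℕ} (hj : j < l₁.length) :
    (x :: (l₁ ++ none :: l₂))[j + 1]? = l₁[j]? := by
  rw [List.getElem?_cons_succ, List.getElem?_append_left hj]

theorem getC (x : Lam) (j : ℕ) : (x :: (l₁ ++ none :: l₂))[l₁.length + 2 + j]? = l₂[j]? := by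
  have : l₁.length + 2 + j = (l₁.length + 1 + j) + 1 := by omega
  rw [this, List.getElem?_cons_succ, List.getElem?_append_right (by omega)]
  have : l₁.length + 1 + j - l₁.length = j + 1 := by omega
  rw [this, List.getElem?_cons_succ]

theorem getInv {x v : Lam} {j : ℕ} (h : (x :: (l₁ ++ none :: l₂))[j]? = some v) :
    (j = 0 ∧ v = x) ∨ (∃ j', j = j' + 1 ∧ j' < l₁.length ∧ l₁[j']? = some v) ∨
    (j = l₁.length + 1 ∧ v = none) ∨ (∃ j', j = l₁.length + 2 + j' ∧ l₂[j']? = some v) := by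
  match j with
  | 0 =>
    rw [List.getElem?_cons_zero] at h
    exact Or.inl ⟨rfl, by injection h with h2; exact h2.symm⟩
  | j + 1 =>
    rcases lt_trichotomy j l₁.length with hj | hj | hj
    · rw [getA x hj] at h
      exact Or.inr (Or.inl ⟨j, rfl, hj, h⟩)
    · subst hj
      rw [getB x] at h
      exact Or.inr (Or.inr (Or.inl ⟨rfl, by injection h with h2; exact h2.symm⟩))
    · have hj2 : j + 1 = l₁.length + 2 + (j - l₁.length - 1) := by omega
      rw [hj2, getC x] at h
      exact Or.inr (Or.inr (Or.inr ⟨_, hj2, h⟩))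

end Compose

section Block

variable {l₁ l₂ : List Lam}

theorem goodK_block (h₁ : GoodP l₁) (h₂ : GoodK l₂) :
    GoodK (some (some l₁.length) :: (l₁ ++ none :: l₂)) := by
  intro i dd hi
  rcases getInv hi with ⟨rfl, hv⟩ | ⟨i', rfl, hi', hl⟩ | ⟨rfl, hv⟩ | ⟨i', rfl, hl⟩
  · simp only [Option.some.injEq] at hv
    subst hv
    refine ⟨by rw [Nat.zero_add]; exact getB _, ?_⟩
    intro j e hj1 hj2 hje
    rcases getInv hje with ⟨rfl, hv⟩ | ⟨j', rfl, hj', hl⟩ | ⟨rfl, hv⟩ | ⟨j', rfl, hl⟩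
    · omega
    · obtain ⟨d', rfl, hle, _, _⟩ := h₁ j' e hl
      exact ⟨d', rfl, by omega⟩
    · omega
    · omega
  · obtain ⟨d', heq, hlen, hT, hnest⟩ := h₁ i' _ hl
    simp only [Option.some.injEq] at heq
    subst heq
    refine ⟨?_, ?_⟩
    · rw [show i' + 1 + dd + 1 = (i' + dd + 1) + 1 by omega]
      rcases lt_or_eq_of_le hlen with hlt | heq2
      · rw [getA _ hlt]; exact hT hlt
      · rw [heq2]; exact getB _
    · intro j e hj1 hj2 hje
      rcases getInv hje with ⟨rfl, hv⟩ | ⟨j', rfl, hj', hl2⟩ | ⟨rfl, hv⟩ | ⟨j', rfl, hl2⟩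
      · omega
      · obtain ⟨d', rfl, hle⟩ := hnest j' e (by omega) (by omega) hl2
        exact ⟨d', rfl, by omega⟩
      · omega
      · omega
  · exact absurd hv (by simp)
  · obtain ⟨hT, hnest⟩ := h₂ i' dd hl
    refine ⟨?_, ?_⟩
    · rw [show l₁.length + 2 + i' + dd + 1 = l₁.length + 2 + (i' + dd + 1) by omega, getC]
      exact hT
    · intro j e hj1 hj2 hje
      rcases getInv hje with ⟨rfl, hv⟩ | ⟨j', rfl, hj', hl2⟩ | ⟨rfl, hv⟩ | ⟨j', rfl, hl2⟩
      · omega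
      · omega
      · omega
      · obtain ⟨d', rfl, hle⟩ := hnest j' e (by omega) (by omega) hl2
        exact ⟨d', rfl, by omega⟩

theorem goodP_block (h₁ : GoodP l₁) (h₂ : GoodP l₂) :
    GoodP (some (some l₁.length) :: (l₁ ++ none :: l₂)) := by
  have hL : (some (some l₁.length) :: (l₁ ++ none :: l₂) : List Lam).length
      = l₁.length + l₂.length + 2 := by simp; omega
  intro i e hi
  rcases getInv hi with ⟨rfl, hv⟩ | ⟨i', rfl, hi', hl⟩ | ⟨rfl, hv⟩ | ⟨i', rfl, hl⟩
  · simp only [Option.some.injEq] at hv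
    subst hv
    refine ⟨l₁.length, rfl, by omega, fun _ => by rw [Nat.zero_add]; exact getB _, ?_⟩
    intro j e hj1 hj2 hje
    rcases getInv hje with ⟨rfl, hv⟩ | ⟨j', rfl, hj', hl⟩ | ⟨rfl, hv⟩ | ⟨j', rfl, hl⟩
    · omega
    · obtain ⟨d', rfl, hle, _, _⟩ := h₁ j' e hl
      exact ⟨d', rfl, by omega⟩
    · omega
    · omega
  · obtain ⟨d', rfl, hlen, hT, hnest⟩ := h₁ i' _ hl
    refine ⟨d', rfl, by omega, ?_, ?_⟩
    · intro _
      rw [show i' + 1 + d' + 1 = (i' + d' + 1) + 1 by omega]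
      rcases lt_or_eq_of_le hlen with hlt | heq2
      · rw [getA _ hlt]; exact hT hlt
      · rw [heq2]; exact getB _
    · intro j e hj1 hj2 hje
      rcases getInv hje with ⟨rfl, hv⟩ | ⟨j', rfl, hj', hl2⟩ | ⟨rfl, hv⟩ | ⟨j', rfl, hl2⟩
      · omega
      · obtain ⟨d'', rfl, hle⟩ := hnest j' e (by omega) (by omega) hl2
        exact ⟨d'', rfl, by omega⟩
      · omega
      · omega
  · exact absurd hv (by simp)
  · obtain ⟨d', rfl, hlen, hT, hnest⟩ := h₂ i' _ hl
    refine ⟨d', rfl, by omega, ?_, ?_⟩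
    · intro hlt
      rw [show l₁.length + 2 + i' + d' + 1 = l₁.length + 2 + (i' + d' + 1) by omega, getC]
      exact hT (by omega)
    · intro j e hj1 hj2 hje
      rcases getInv hje with ⟨rfl, hv⟩ | ⟨j', rfl, hj', hl2⟩ | ⟨rfl, hv⟩ | ⟨j', rfl, hl2⟩
      · omega
      · omega
      · omega
      · obtain ⟨d'', rfl, hle⟩ := hnest j' e (by omega) (by omega) hl2
        exact ⟨d'', rfl, by omega⟩

end Block

theorem PC.good : ∀ p : PC, GoodP p.decode
  | nil => by intro i e hi; simp [decode] at hi
  | row p => goodP_cons_row (PC.good p)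
  | virt p => by
      have h := goodP_cons_virt (PC.good p)
      rwa [PC.length_decode] at h
  | arc p₁ p₂ => by
      have h := goodP_block (PC.good p₁) (PC.good p₂)
      rwa [PC.length_decode] at h

theorem KC.good : ∀ k : KC, GoodK k.decode
  | nil => by intro i e hi; simp [decode] at hi
  | row k => goodK_cons (by simp) (KC.good k)
  | free k => goodK_cons (by simp) (KC.good k)
  | block p k => by
      have h := goodK_block (PC.good p) (KC.good k)
      rwa [PC.length_decode] at h

theorem PC.decode_inj : ∀ p q : PC, p.decode = q.decode → p = q
  | nil, nil, _ => rfl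
  | nil, row _, h | nil, virt _, h | nil, arc _ _, h => by simp [decode] at h
  | row _, nil, h | virt _, nil, h | arc _ _, nil, h => by simp [decode] at h
  | row p, row q, h => by
      rw [decode, decode] at h
      rw [PC.decode_inj p q (by injection h)]
  | row _, virt _, h | virt _, row _, h | row _, arc _ _, h | arc _ _, row _, h => by
      simp [decode] at h
  | virt p, virt q, h => by
      rw [decode, decode] at h
      rw [PC.decode_inj p q (by injection h)]
  | virt p, arc q₁ q₂, h => by
      rw [decode, decode] at h
      have h2 : p.decode = q₁.decode ++ none :: q₂.decode := by injection h
      have := congrArg List.length h2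
      simp [PC.length_decode, PC.length_decode] at this
      have h3 : p.size = q₁.size := by
        have := congrArg List.length h2
        simp [PC.length_decode] at this
        have h4 : (some (some p.size) : Lam) = some (some q₁.size) := by injection h
        injection (by injection h4 : (some p.size : Option ℕ) = some q₁.size)
      omega
  | arc p₁ p₂, virt q, h => by
      rw [decode, decode] at h
      have h2 : p₁.decode ++ none :: p₂.decode = q.decode := by injection h
      have h3 : p₁.size = q.size := by
        have h4 : (some (some p₁.size) : Lam) = some (some q.size) := by injection h
        injection (by injection h4 : (some p₁.size : Option ℕ) = some q.size)
      have := congrArg List.length h2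
      simp [PC.length_decode] at this
      omega
  | arc p₁ p₂, arc q₁ q₂, h => by
      rw [decode, decode] at h
      have hs : p₁.size = q₁.size := by
        have h4 : (some (some p₁.size) : Lam) = some (some q₁.size) := by injection h
        injection (by injection h4 : (some p₁.size : Option ℕ) = some q₁.size)
      have h2 : p₁.decode ++ none :: p₂.decode = q₁.decode ++ none :: q₂.decode := by injection h
      have hlen : p₁.decode.length = q₁.decode.length := by
        rw [PC.length_decode, PC.length_decode, hs]
      obtain ⟨e1, e2⟩ := List.append_inj h2 hlen
      have e3 : p₂.decode = q₂.decode := by injection e2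
      rw [PC.decode_inj p₁ q₁ e1, PC.decode_inj p₂ q₂ e3]

theorem KC.decode_inj : ∀ k q : KC, k.decode = q.decode → k = q
  | nil, nil, _ => rfl
  | nil, row _, h | nil, free _, h | nil, block _ _, h => by simp [decode] at h
  | row _, nil, h | free _, nil, h | block _ _, nil, h => by simp [decode] at h
  | row k, row q, h => by
      rw [decode, decode] at h
      rw [KC.decode_inj k q (by injection h)]
  | row _, free _, h | free _, row _, h | row _, block _ _, h | block _ _, row _, h => by
      simp [decode] at h
  | free k, free q, h => by
      rw [decode, decode] at h
      rw [KC.decode_inj k q (by injection h)]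
  | free _, block _ _, h | block _ _, free _, h => by simp [decode] at h
  | block p₁ k₂, block q₁ q₂, h => by
      rw [decode, decode] at h
      have hs : p₁.size = q₁.size := by
        have h4 : (some (some p₁.size) : Lam) = some (some q₁.size) := by injection h
        injection (by injection h4 : (some p₁.size : Option ℕ) = some q₁.size)
      have h2 : p₁.decode ++ none :: k₂.decode = q₁.decode ++ none :: q₂.decode := by injection h
      have hlen : p₁.decode.length = q₁.decode.length := by
        rw [PC.length_decode, PC.length_decode, hs]
      obtain ⟨e1, e2⟩ := List.append_inj h2 hlen
      have e3 : k₂.decode = q₂.decode := by injection e2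
      rw [PC.decode_inj p₁ q₁ e1, KC.decode_inj k₂ q₂ e3]

/-- Surjectivity of `PC.decode` onto `GoodP` lists. -/
theorem exists_pc : ∀ (N : ℕ) (l : List Lam), l.length ≤ N → GoodP l → ∃ p : PC, p.decode = l
  | _, [], _, _ => ⟨PC.nil, rfl⟩
  | 0, _ :: _, hN, _ => by simp at hN
  | N + 1, none :: l', hN, h => by
      obtain ⟨p, hp⟩ := exists_pc N l' (by simpa using hN) (by simpa using h.drop 1)
      exact ⟨PC.row p, by rw [PC.decode, hp]⟩
  | N + 1, some none :: l', hN, h => by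
      obtain ⟨d, hd, -⟩ := h 0 none (by rw [List.getElem?_cons_zero])
      exact absurd hd (by simp)
  | N + 1, some (some d) :: l', hN, h => by
      obtain ⟨d', hd', hlen, hT, hnest⟩ := h 0 (some d) (by rw [List.getElem?_cons_zero])
      obtain rfl : d = d' := by injection hd'
      simp only [List.length_cons, Nat.zero_add] at hlen hT
      rcases lt_or_eq_of_le hlen with hlt | heq
      · -- real arc: `some (some d) :: (take d l' ++ none :: drop (d+1) l')`
        have hdl : d < l'.length := by omega
        have hTd : l'[d]? = some none := by
          have := hT (by omega)
          rwa [List.getElem?_cons_succ] at this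
        have hdrop : GoodP l' := by simpa using h.drop 1
        have h1 : GoodP (l'.take d) := by
          refine goodP_take hdrop.nest d (by omega) ?_
          intro j e hj hje
          have hje' : (some (some d) :: l')[j + 1]? = some (some e) := by
            rwa [List.getElem?_cons_succ]
          obtain ⟨d'', rfl, hle⟩ := hnest (j + 1) e (by omega) (by omega) hje'
          exact ⟨d'', rfl, by omega⟩
        have h2 : GoodP (l'.drop (d + 1)) := by
          have := (h.drop (d + 2))
          simpa using this
        obtain ⟨p₁, hp₁⟩ := exists_pc N (l'.take d) (by simp at hN ⊢; omega) h1
        obtain ⟨p₂, hp₂⟩ := exists_pc N (l'.drop (d + 1)) (by simp at hN ⊢; omega) h2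
        refine ⟨PC.arc p₁ p₂, ?_⟩
        have hsize : p₁.size = d := by
          rw [← PC.length_decode, hp₁, List.length_take]; omega
        have hgd : l'[d] = none := by
          have h5 := hTd
          rw [List.getElem?_eq_getElem hdl] at h5
          injection h5
        have hsplit : l'.take d ++ none :: l'.drop (d + 1) = l' := by
          conv_rhs => rw [← List.take_append_drop d l']
          rw [List.drop_eq_getElem_cons hdl, hgd]
        rw [PC.decode, hp₁, hp₂, hsize, hsplit]
      · -- virtual arc
        obtain ⟨p, hp⟩ := exists_pc N l' (by simpa using hN) (by simpa using h.drop 1)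
        refine ⟨PC.virt p, ?_⟩
        rw [PC.decode, hp]
        have : p.size = d := by rw [← PC.length_decode, hp]; omega
        rw [this]

/-- Surjectivity of `KC.decode` onto `GoodK` lists. -/
theorem exists_kc : ∀ (N : ℕ) (l : List Lam), l.length ≤ N → GoodK l → ∃ k : KC, k.decode = l
  | _, [], _, _ => ⟨KC.nil, rfl⟩
  | 0, _ :: _, hN, _ => by simp at hN
  | N + 1, none :: l', hN, h => by
      obtain ⟨k, hk⟩ := exists_kc N l' (by simpa using hN) (by simpa using h.drop 1)
      exact ⟨KC.row k, by rw [KC.decode, hk]⟩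
  | N + 1, some none :: l', hN, h => by
      obtain ⟨k, hk⟩ := exists_kc N l' (by simpa using hN) (by simpa using h.drop 1)
      exact ⟨KC.free k, by rw [KC.decode, hk]⟩
  | N + 1, some (some d) :: l', hN, h => by
      obtain ⟨hT, hnest⟩ := h 0 d (by rw [List.getElem?_cons_zero])
      rw [Nat.zero_add, List.getElem?_cons_succ] at hT
      have hdl : d < l'.length := by
        by_contra hc
        rw [List.getElem?_eq_none (by omega)] at hT
        exact nomatch hT
      have hdrop : GoodK l' := by simpa using h.drop 1
      have h1 : GoodP (l'.take d) := by
        refine goodP_take hdrop.nest d (by omega) ?_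
        intro j e hj hje
        have hje' : (some (some d) :: l')[j + 1]? = some (some e) := by
          rwa [List.getElem?_cons_succ]
        obtain ⟨d'', rfl, hle⟩ := hnest (j + 1) e (by omega) (by omega) hje'
        exact ⟨d'', rfl, by omega⟩
      have h2 : GoodK (l'.drop (d + 1)) := hdrop.drop (d + 1)
      obtain ⟨p₁, hp₁⟩ := exists_pc N (l'.take d) (by simp at hN ⊢; omega) h1
      obtain ⟨k₂, hk₂⟩ := exists_kc N (l'.drop (d + 1)) (by simp at hN ⊢; omega) h2
      refine ⟨KC.block p₁ k₂, ?_⟩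
      have hsize : p₁.size = d := by
        rw [← PC.length_decode, hp₁, List.length_take]; omega
      have hgd : l'[d] = none := by
        have h5 := hT
        rw [List.getElem?_eq_getElem hdl] at h5
        injection h5
      have hsplit : l'.take d ++ none :: l'.drop (d + 1) = l' := by
        conv_rhs => rw [← List.take_append_drop d l']
        rw [List.drop_eq_getElem_cons hdl, hgd]
      rw [KC.decode, hp₁, hk₂, hsize, hsplit]

namespace PC

def toTree : PC → Tree Unit
  | nil => .node () .nil .nil
  | row p => .node () .nil p.toTree
  | virt p => .node () p.toTree .nil
  | arc p₁ p₂ => .node () p₁.toTree p₂.toTree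

theorem toTree_ne_nil : ∀ p : PC, p.toTree ≠ .nil
  | nil => by simp [toTree]
  | row _ => by simp [toTree]
  | virt _ => by simp [toTree]
  | arc _ _ => by simp [toTree]

theorem numNodes_toTree : ∀ p : PC, p.toTree.numNodes = p.size + 1
  | nil => rfl
  | row p => by simp [toTree, size, Tree.numNodes, numNodes_toTree p]
  | virt p => by simp [toTree, size, Tree.numNodes, numNodes_toTree p]
  | arc p₁ p₂ => by
      simp [toTree, size, Tree.numNodes, numNodes_toTree p₁, numNodes_toTree p₂]; omega

def ofTree : Tree Unit → PC
  | .nil => .nil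
  | .node _ .nil .nil => .nil
  | .node _ .nil (.node a l r) => .row (ofTree (.node a l r))
  | .node _ (.node a l r) .nil => .virt (ofTree (.node a l r))
  | .node _ (.node a l r) (.node a' l' r') =>
      .arc (ofTree (.node a l r)) (ofTree (.node a' l' r'))

theorem ofTree_toTree : ∀ p : PC, ofTree p.toTree = p
  | nil => rfl
  | row p => by
      rcases hp : p.toTree with _ | ⟨a, l, r⟩
      · exact absurd hp (toTree_ne_nil p)
      · have ih := ofTree_toTree p
        rw [toTree, hp]
        show PC.row (ofTree (.node a l r)) = PC.row p
        rw [hp] at ih; exact congrArg PC.row ih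
  | virt p => by
      rcases hp : p.toTree with _ | ⟨a, l, r⟩
      · exact absurd hp (toTree_ne_nil p)
      · have ih := ofTree_toTree p
        rw [toTree, hp]
        show PC.virt (ofTree (.node a l r)) = PC.virt p
        rw [hp] at ih; exact congrArg PC.virt ih
  | arc p₁ p₂ => by
      rcases hp : p₁.toTree with _ | ⟨a, l, r⟩
      · exact absurd hp (toTree_ne_nil p₁)
      · rcases hq : p₂.toTree with _ | ⟨a', l', r'⟩
        · exact absurd hq (toTree_ne_nil p₂)
        · have ih₁ := ofTree_toTree p₁
          have ih₂ := ofTree_toTree p₂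
          rw [toTree, hp, hq]
          show PC.arc (ofTree (.node a l r)) (ofTree (.node a' l' r')) = PC.arc p₁ p₂
          rw [hp] at ih₁; rw [hq] at ih₂; exact congrArg₂ PC.arc ih₁ ih₂


theorem toTree_ofTree : ∀ t : Tree Unit, t ≠ .nil → (ofTree t).toTree = t
  | .nil, h => absurd rfl h
  | .node a .nil .nil, _ => by cases a; rfl
  | .node a .nil (.node b l r), _ => by
      cases a
      rw [ofTree, toTree, toTree_ofTree (.node b l r) (by simp)]
  | .node a (.node b l r) .nil, _ => by
      cases a
      rw [ofTree, toTree, toTree_ofTree (.node b l r) (by simp)]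
  | .node a (.node b l r) (.node b' l' r'), _ => by
      cases a
      rw [ofTree, toTree, toTree_ofTree (.node b l r) (by simp),
        toTree_ofTree (.node b' l' r') (by simp)]

end PC

namespace KC

def toTree : KC → Tree Unit
  | nil => .node () .nil .nil
  | row k => .node () .nil k.toTree
  | free k => .node () k.toTree .nil
  | block p k => .node () p.toTree k.toTree

theorem toTree_ne_nil : ∀ k : KC, k.toTree ≠ .nil
  | nil => by simp [toTree]
  | row _ => by simp [toTree]
  | free _ => by simp [toTree]
  | block _ _ => by simp [toTree]

theorem numNodes_toTree : ∀ k : KC, k.toTree.numNodes = k.size + 1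
  | nil => rfl
  | row k => by simp [toTree, size, Tree.numNodes, numNodes_toTree k]
  | free k => by simp [toTree, size, Tree.numNodes, numNodes_toTree k]
  | block p k => by
      simp [toTree, size, Tree.numNodes, PC.numNodes_toTree p, numNodes_toTree k]; omega

def ofTree : Tree Unit → KC
  | .nil => .nil
  | .node _ .nil .nil => .nil
  | .node _ .nil (.node a l r) => .row (ofTree (.node a l r))
  | .node _ (.node a l r) .nil => .free (ofTree (.node a l r))
  | .node _ (.node a l r) (.node a' l' r') =>
      .block (PC.ofTree (.node a l r)) (ofTree (.node a' l' r'))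

theorem ofTree_toTree : ∀ k : KC, ofTree k.toTree = k
  | nil => rfl
  | row k => by
      rcases hp : k.toTree with _ | ⟨a, l, r⟩
      · exact absurd hp (toTree_ne_nil k)
      · have ih := ofTree_toTree k
        rw [toTree, hp]
        show KC.row (ofTree (.node a l r)) = KC.row k
        rw [hp] at ih; exact congrArg KC.row ih
  | free k => by
      rcases hp : k.toTree with _ | ⟨a, l, r⟩
      · exact absurd hp (toTree_ne_nil k)
      · have ih := ofTree_toTree k
        rw [toTree, hp]
        show KC.free (ofTree (.node a l r)) = KC.free k
        rw [hp] at ih; exact congrArg KC.free ih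
  | block p k => by
      rcases hp : p.toTree with _ | ⟨a, l, r⟩
      · exact absurd hp (PC.toTree_ne_nil p)
      · rcases hq : k.toTree with _ | ⟨a', l', r'⟩
        · exact absurd hq (toTree_ne_nil k)
        · have ih₂ := ofTree_toTree k
          rw [toTree, hp, hq]
          show KC.block (PC.ofTree (.node a l r)) (ofTree (.node a' l' r')) = KC.block p k
          have ih₁ := PC.ofTree_toTree p
          rw [hp] at ih₁; rw [hq] at ih₂; exact congrArg₂ KC.block ih₁ ih₂

theorem toTree_inj {k q : KC} (h : k.toTree = q.toTree) : k = q := by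
  rw [← ofTree_toTree k, ← ofTree_toTree q, h]


theorem toTree_ofTree : ∀ t : Tree Unit, t ≠ .nil → (ofTree t).toTree = t
  | .nil, h => absurd rfl h
  | .node a .nil .nil, _ => by cases a; rfl
  | .node a .nil (.node b l r), _ => by
      cases a
      rw [ofTree, toTree, toTree_ofTree (.node b l r) (by simp)]
  | .node a (.node b l r) .nil, _ => by
      cases a
      rw [ofTree, toTree, toTree_ofTree (.node b l r) (by simp)]
  | .node a (.node b l r) (.node b' l' r'), _ => by
      cases a
      rw [ofTree, toTree, PC.toTree_ofTree (.node b l r) (by simp),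
        toTree_ofTree (.node b' l' r') (by simp)]

theorem toTree_surj {t : Tree Unit} (ht : t ≠ .nil) : ∃ k : KC, k.toTree = t :=
  ⟨ofTree t, toTree_ofTree t ht⟩

end KC

/-- The number of good lists of length `n` is the Catalan number `C (n+1)`. -/
theorem card_goodK (n : ℕ) :
    Nat.card {l : List Lam // GoodK l ∧ l.length = n} = catalan (n + 1) := by
  have step1 : Nat.card {k : KC // k.size = n}
      = Nat.card {l : List Lam // GoodK l ∧ l.length = n} := by
    apply Nat.card_eq_of_bijective
      (f := fun k => ⟨k.1.decode, k.1.good, by rw [KC.length_decode, k.2]⟩)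
    constructor
    · intro k q h
      have := KC.decode_inj k.1 q.1 (congrArg Subtype.val h)
      exact Subtype.ext this
    · rintro ⟨l, hg, hl⟩
      obtain ⟨k, hk⟩ := exists_kc l.length l le_rfl hg
      exact ⟨⟨k, by rw [← KC.length_decode, hk, hl]⟩, Subtype.ext hk⟩
  have step2 : Nat.card {k : KC // k.size = n}
      = Nat.card {t : Tree Unit // t.numNodes = n + 1} := by
    apply Nat.card_eq_of_bijective
      (f := fun k => ⟨k.1.toTree, by rw [KC.numNodes_toTree, k.2]⟩)
    constructor
    · intro k q h
      exact Subtype.ext (KC.toTree_inj (congrArg Subtype.val h))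
    · rintro ⟨t, ht⟩
      have htn : t ≠ .nil := by
        intro h; rw [h] at ht; simp [Tree.numNodes] at ht
      obtain ⟨k, hk⟩ := KC.toTree_surj htn
      refine ⟨⟨k, ?_⟩, Subtype.ext hk⟩
      have := KC.numNodes_toTree k
      rw [hk, ht] at this
      omega
  have step3 : Nat.card {t : Tree Unit // t.numNodes = n + 1} = catalan (n + 1) := by
    have : Fintype {t : Tree Unit // t.numNodes = n + 1} :=
      Fintype.subtype (Tree.treesOfNumNodesEq (n + 1)) (by simp [BinaryTree.mem_treesOfNumNodesEq])
    rw [Nat.card_eq_fintype_card, ← BinaryTree.treesOfNumNodesEq_card_eq_catalan]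
    exact Fintype.card_of_subtype _ (by simp [BinaryTree.mem_treesOfNumNodesEq])
  rw [← step1, step2, step3]


/-- A Catalan alternative tableau of size `n`.

The shape is a path of `n` steps from the vertical axis to the horizontal axis;
`shape s = true` means the `s`-th step is vertical (down, read as `+1`) and
`shape s = false` means it is horizontal (right, read as `-1`).  The cells of the
tableau are the pairs `(c, r)` where `c` is a horizontal step, `r` is a vertical step
and `c` occurs before `r` on the path (`c` indexes the column, `r` the row of the cell;
smaller `c` means further left, smaller `r` means higher up).

`dots c r = some true` means a red dot in cell `(c, r)`, `some false` a blue dot,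
`none` no dot.  The axioms say: dots lie only in cells; no dot lies (strictly) below a
red dot; no dot lies (strictly) to the left of a blue dot; and every cell is below a
red dot or to the left of a blue dot (a dotted cell covering itself). -/
structure CatAltTableau (n : ℕ) where
  shape : Fin n → Bool
  dots : Fin n → Fin n → Option Bool
  dots_mem_cells : ∀ c r, dots c r ≠ none → shape c = false ∧ shape r = true ∧ c < r
  no_dot_below_red : ∀ c r r', dots c r = some true → r < r' → dots c r' = none
  no_dot_left_of_blue : ∀ c r c', dots c r = some false → c' < c → dots c' r = none
  cover : ∀ c r, shape c = false → shape r = true → c < r →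
    (∃ r₀, r₀ ≤ r ∧ dots c r₀ = some true) ∨ (∃ c₀, c ≤ c₀ ∧ dots c₀ r = some false)

def Alive (l : List Lam) (c r : ℕ) : Prop :=
  (∃ e, l[c]? = some (some e)) ∧ l[r]? = some none ∧ c < r ∧
    ∀ d : ℕ, l[c]? = some (some (some d)) → r < c + d + 1

def IsRed (l : List Lam) (c r : ℕ) : Prop :=
  l[c]? = some (some (some (r - c - 1))) ∧ c < r

def IsBlue (l : List Lam) (c r : ℕ) : Prop :=
  Alive l c r ∧ ∀ c', Alive l c' r → c' ≤ c

theorem isRed_iff {l : List Lam} {c d : ℕ} (hc : l[c]? = some (some (some d))) (r : ℕ) :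
    IsRed l c r ↔ r = c + d + 1 := by
  constructor
  · rintro ⟨h1, h2⟩
    rw [hc] at h1
    simp only [Option.some.injEq] at h1
    omega
  · rintro rfl
    refine ⟨?_, by omega⟩
    rw [show c + d + 1 - c - 1 = d by omega]
    exact hc

theorem not_isBlue_of_isRed {l : List Lam} {c r : ℕ} (hr : IsRed l c r) : ¬ IsBlue l c r := by
  rintro ⟨⟨_, _, _, h4⟩, _⟩
  obtain ⟨h1, h2⟩ := hr
  have := h4 _ h1
  omega

theorem red_target {l : List Lam} (h : GoodK l) {c r : ℕ} (hr : IsRed l c r) :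
    l[r]? = some none := by
  obtain ⟨h1, h2⟩ := hr
  have := (h c (r - c - 1) h1).1
  rwa [show c + (r - c - 1) + 1 = r by omega] at this

open Classical in
noncomputable def dotsOf (l : List Lam) (c r : ℕ) : Option Bool :=
  if IsRed l c r then some true else if IsBlue l c r then some false else none

theorem dotsOf_red_iff {l : List Lam} {c r : ℕ} : dotsOf l c r = some true ↔ IsRed l c r := by
  unfold dotsOf
  split_ifs with h1 h2 <;> simp [*]

theorem dotsOf_blue_iff {l : List Lam} {c r : ℕ} :
    dotsOf l c r = some false ↔ ¬ IsRed l c r ∧ IsBlue l c r := by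
  unfold dotsOf
  split_ifs with h1 h2 <;> simp [*]

theorem dotsOf_none_iff {l : List Lam} {c r : ℕ} :
    dotsOf l c r = none ↔ ¬ IsRed l c r ∧ ¬ IsBlue l c r := by
  unfold dotsOf
  split_ifs with h1 h2 <;> simp [*]

noncomputable def tabOf (n : ℕ) (l : List Lam) (hn : l.length = n) (h : GoodK l) :
    CatAltTableau n where
  shape i := decide (l[(i : ℕ)]? = some none)
  dots c r := dotsOf l c.val r.val
  dots_mem_cells := by
    intro c r hne
    have hcr : ¬ (¬ IsRed l c.val r.val ∧ ¬ IsBlue l c.val r.val) := by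
      intro hc; exact hne (dotsOf_none_iff.2 hc)
    push_neg at hcr
    by_cases hred : IsRed l c.val r.val
    · refine ⟨by simp [hred.1], by simp [red_target h hred], ?_⟩
      rw [Fin.lt_def]; exact hred.2
    · obtain ⟨⟨⟨e, he⟩, hrn, hlt, -⟩, -⟩ := hcr hred
      exact ⟨by simp [he], by simp [hrn], by rw [Fin.lt_def]; exact hlt⟩
  no_dot_below_red := by
    intro c r r' hred hlt
    rw [dotsOf_red_iff] at hred
    rw [Fin.lt_def] at hlt
    obtain ⟨h1, h2⟩ := hred
    rw [dotsOf_none_iff]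
    constructor
    · rintro ⟨g1, g2⟩
      have heq := h1.symm.trans g1
      simp only [Option.some.injEq] at heq
      omega
    · rintro ⟨⟨-, -, -, h4⟩, -⟩
      have := h4 _ h1
      omega
  no_dot_left_of_blue := by
    intro c r c' hblue hlt
    rw [Fin.lt_def] at hlt
    rw [dotsOf_blue_iff] at hblue
    obtain ⟨hnr, ⟨⟨⟨e, he⟩, hrn, hcr, h4⟩, hmax⟩⟩ := hblue
    rw [dotsOf_none_iff]
    constructor
    · rintro ⟨g1, g2⟩
      obtain ⟨-, hnest⟩ := h c'.val (r.val - c'.val - 1) g1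
      obtain ⟨d'', he'', hle⟩ := hnest c.val e hlt (by omega) he
      subst he''
      have := h4 d'' he
      omega
    · rintro ⟨alive', hmax'⟩
      have := hmax' c.val ⟨⟨e, he⟩, hrn, hcr, h4⟩
      omega
  cover := by
    intro c r hsc hsr hcr
    rw [Fin.lt_def] at hcr
    have hrn : l[r.val]? = some none := of_decide_eq_true hsr
    obtain ⟨v, hv⟩ : ∃ v, l[c.val]? = some v :=
      ⟨_, List.getElem?_eq_getElem (by rw [hn]; exact c.2)⟩
    obtain ⟨e, rfl⟩ : ∃ e, v = some e := by
      have hsc' : decide (l[(c : ℕ)]? = some none) = false := hsc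
      cases v with
      | none => rw [hv] at hsc'; simp at hsc'
      | some e => exact ⟨e, rfl⟩
    by_cases hm : ∃ d : ℕ, l[c.val]? = some (some (some d)) ∧ c.val + d + 1 ≤ r.val
    · obtain ⟨d, hd, hdle⟩ := hm
      have hlt : c.val + d + 1 < n := by have := r.2; omega
      refine Or.inl ⟨⟨c.val + d + 1, hlt⟩, by rw [Fin.le_def]; exact hdle, ?_⟩
      show dotsOf l c.val (c.val + d + 1) = some true
      rw [dotsOf_red_iff, isRed_iff hd]
    · push_neg at hm
      have halive : Alive l c.val r.val :=
        ⟨⟨e, hv⟩, hrn, hcr, fun d hd => by have := hm d hd; omega⟩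
      classical
      set S := (Finset.range n).filter (fun c' => Alive l c' r.val) with hS
      have hcS : c.val ∈ S :=
        Finset.mem_filter.2 ⟨Finset.mem_range.2 c.2, halive⟩
      have hne : S.Nonempty := ⟨_, hcS⟩
      have hc₀ : Alive l (S.max' hne) r.val :=
        (Finset.mem_filter.1 (S.max'_mem hne)).2
      have hmax : ∀ c', Alive l c' r.val → c' ≤ S.max' hne := by
        intro c' ha
        apply S.le_max'
        refine Finset.mem_filter.2 ⟨Finset.mem_range.2 ?_, ha⟩
        have := ha.2.2.1
        have := r.2
        omega
      have hc₀n : S.max' hne < n := by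
        have := hc₀.2.2.1
        have := r.2
        omega
      refine Or.inr ⟨⟨S.max' hne, hc₀n⟩, by rw [Fin.le_def]; exact S.le_max' _ hcS, ?_⟩
      show dotsOf l (S.max' hne) r.val = some false
      rw [dotsOf_blue_iff]
      exact ⟨fun hred => not_isBlue_of_isRed hred ⟨hc₀, hmax⟩, hc₀, hmax⟩

/-! ### Encoding a tableau as a list -/

noncomputable def encode {n : ℕ} (t : CatAltTableau n) : List Lam :=
  List.ofFn fun c : Fin n =>
    if t.shape c then none
    else some (((List.finRange n).find? fun r => t.dots c r == some true).map
      fun r : Fin n => (r : ℕ) - (c : ℕ) - 1)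

theorem length_encode {n : ℕ} (t : CatAltTableau n) : (encode t).length = n := by
  rw [encode, List.length_ofFn]

theorem encode_get {n : ℕ} (t : CatAltTableau n) (c : Fin n) :
    (encode t)[(c : ℕ)]? = some (if t.shape c then none
      else some (((List.finRange n).find? fun r => t.dots c r == some true).map
        fun r : Fin n => (r : ℕ) - (c : ℕ) - 1)) := by
  rw [encode, List.getElem?_ofFn, dif_pos c.2]

theorem encode_get_none {n : ℕ} (t : CatAltTableau n) {i : ℕ} (hi : n ≤ i) :
    (encode t)[i]? = none :=
  List.getElem?_eq_none (by rw [length_encode]; exact hi)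

theorem red_unique {n : ℕ} (t : CatAltTableau n) (c : Fin n) {a b : Fin n}
    (ha : t.dots c a = some true) (hb : t.dots c b = some true) : a = b := by
  rcases lt_trichotomy a b with h | h | h
  · have := t.no_dot_below_red c a b ha h
    rw [hb] at this; exact nomatch this
  · exact h
  · have := t.no_dot_below_red c b a hb h
    rw [ha] at this; exact nomatch this

theorem find?_red_iff {n : ℕ} (t : CatAltTableau n) (c : Fin n) (r : Fin n) :
    ((List.finRange n).find? fun r => t.dots c r == some true) = some r ↔
      t.dots c r = some true := by
  constructor
  · intro h
    have hp := List.find?_some (p := fun r => t.dots c r == some true) h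
    exact eq_of_beq hp
  · intro h
    have hs : (((List.finRange n).find? fun r => t.dots c r == some true)).isSome := by
      rw [List.find?_isSome]
      exact ⟨r, List.mem_finRange r, by simp [h]⟩
    obtain ⟨a, ha⟩ := Option.isSome_iff_exists.1 hs
    have hp := List.find?_some (p := fun r => t.dots c r == some true) ha
    have hpa : t.dots c a = some true := eq_of_beq hp
    rw [ha, red_unique t c hpa h]

/-- The encoding of any tableau is a good list. -/
theorem goodK_encode {n : ℕ} (t : CatAltTableau n) : GoodK (encode t) := by
  intro i d hi
  have hin : i < n := by
    by_contra hc
    rw [encode_get_none t (by omega)] at hi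
    exact nomatch hi
  have hci : ((⟨i, hin⟩ : Fin n) : ℕ) = i := rfl
  rw [show i = ((⟨i, hin⟩ : Fin n) : ℕ) from rfl, encode_get t ⟨i, hin⟩] at hi
  set c : Fin n := ⟨i, hin⟩
  simp only [Option.some.injEq] at hi
  by_cases hsh : t.shape c
  · rw [if_pos hsh] at hi; exact nomatch hi
  · rw [if_neg hsh] at hi
    simp only [Option.some.injEq] at hi
    obtain ⟨r₀, hfind, hoff⟩ := Option.map_eq_some_iff.1 hi
    have hred : t.dots c r₀ = some true := (find?_red_iff t c r₀).1 hfind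
    obtain ⟨hshc, hshr, hcr⟩ := t.dots_mem_cells c r₀ (by rw [hred]; simp)
    rw [Fin.lt_def] at hcr
    rw [hci] at hcr
    have hr₀ : (r₀ : ℕ) = i + d + 1 := by omega
    constructor
    · rw [← hr₀, encode_get t r₀, if_pos hshr]
    · intro j e hj1 hj2 hje
      have hjn : j < n := by have := r₀.2; omega
      have hcji : ((⟨j, hjn⟩ : Fin n) : ℕ) = j := rfl
      rw [show j = ((⟨j, hjn⟩ : Fin n) : ℕ) from rfl, encode_get t ⟨j, hjn⟩] at hje
      set cj : Fin n := ⟨j, hjn⟩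
      simp only [Option.some.injEq] at hje
      by_cases hshj : t.shape cj
      · rw [if_pos hshj] at hje; exact nomatch hje
      · rw [if_neg hshj] at hje
        simp only [Option.some.injEq] at hje
        have hcell : cj < r₀ := by rw [Fin.lt_def, hcji]; omega
        rcases t.cover cj r₀ (Bool.eq_false_iff.2 hshj) hshr hcell with
          ⟨r₁, hr₁le, hred₁⟩ | ⟨c₀, hc₀ge, hblue⟩
        · have hfind₁ : ((List.finRange n).find? fun r => t.dots cj r == some true) = some r₁ :=
            (find?_red_iff t cj r₁).2 hred₁
          rw [hfind₁, Option.map_some] at hje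
          obtain ⟨-, -, hjr₁⟩ := t.dots_mem_cells cj r₁ (by rw [hred₁]; simp)
          rw [Fin.lt_def, hcji] at hjr₁
          rw [Fin.le_def] at hr₁le
          exact ⟨(r₁ : ℕ) - (cj : ℕ) - 1, hje.symm, by rw [hcji]; omega⟩
        · have hlt : c < c₀ := by
            rw [Fin.lt_def, hci]
            rw [Fin.le_def, hcji] at hc₀ge
            omega
          have := t.no_dot_left_of_blue c₀ r₀ c hblue hlt
          rw [hred] at this
          exact nomatch this

theorem shape_iff_row {n : ℕ} (t : CatAltTableau n) (i : Fin n) :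
    t.shape i = true ↔ (encode t)[(i : ℕ)]? = some none := by
  rw [encode_get t i]
  constructor
  · intro h; rw [if_pos h]
  · intro h
    by_cases hs : t.shape i
    · exact hs
    · rw [if_neg hs] at h
      simp at h

theorem col_red {n : ℕ} (t : CatAltTableau n) {c r₁ : Fin n} (h : t.dots c r₁ = some true) :
    (encode t)[(c : ℕ)]? = some (some (some ((r₁ : ℕ) - (c : ℕ) - 1))) := by
  have hsc : t.shape c = false := (t.dots_mem_cells c r₁ (by rw [h]; simp)).1
  rw [encode_get t c, if_neg (by rw [hsc]; simp), (find?_red_iff t c r₁).2 h,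
    Option.map_some]

theorem col_arc {n : ℕ} (t : CatAltTableau n) (c : Fin n) (d : ℕ)
    (h : (encode t)[(c : ℕ)]? = some (some (some d))) :
    ∃ r₁ : Fin n, t.dots c r₁ = some true ∧ (r₁ : ℕ) = (c : ℕ) + d + 1 := by
  rw [encode_get t c] at h
  simp only [Option.some.injEq] at h
  by_cases hs : t.shape c
  · rw [if_pos hs] at h; exact nomatch h
  · rw [if_neg hs] at h
    simp only [Option.some.injEq] at h
    obtain ⟨r₁, hfind, hoff⟩ := Option.map_eq_some_iff.1 h
    have hred : t.dots c r₁ = some true := (find?_red_iff t c r₁).1 hfind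
    have hcr : (c : ℕ) < (r₁ : ℕ) := Fin.lt_def.1 (t.dots_mem_cells c r₁ (by rw [hred]; simp)).2.2
    exact ⟨r₁, hred, by omega⟩

theorem alive_encode {n : ℕ} (t : CatAltTableau n) {c r : Fin n} :
    Alive (encode t) (c : ℕ) (r : ℕ) ↔
      (t.shape c = false ∧ t.shape r = true ∧ c < r ∧
        ∀ r₁ : Fin n, t.dots c r₁ = some true → r < r₁) := by
  constructor
  · rintro ⟨⟨e, he⟩, hrn, hcr, h4⟩
    refine ⟨?_, (shape_iff_row t r).2 hrn, Fin.lt_def.2 hcr, ?_⟩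
    · by_cases hs : t.shape c
      · rw [(shape_iff_row t c).1 hs] at he; exact absurd he (by simp)
      · exact Bool.eq_false_iff.2 hs
    · intro r₁ hred
      have hcl := col_red t hred
      have hcr₁ : (c : ℕ) < (r₁ : ℕ) :=
        Fin.lt_def.1 (t.dots_mem_cells c r₁ (by rw [hred]; simp)).2.2
      have := h4 _ hcl
      rw [Fin.lt_def]
      omega
  · rintro ⟨hsc, hsr, hcr, h4⟩
    refine ⟨?_, (shape_iff_row t r).1 hsr, Fin.lt_def.1 hcr, ?_⟩
    · rw [encode_get t c, if_neg (by rw [hsc]; simp)]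
      exact ⟨_, rfl⟩
    · intro d hd
      obtain ⟨r₁, hred, hr₁⟩ := col_arc t c d hd
      have := Fin.lt_def.1 (h4 r₁ hred)
      omega

theorem max_alive {n : ℕ} (t : CatAltTableau n) {c r : Fin n}
    (hblue : t.dots c r = some false) :
    ∀ c', Alive (encode t) c' (r : ℕ) → c' ≤ (c : ℕ) := by
  intro c' ha
  by_contra hgt
  push_neg at hgt
  have hc'n : c' < n := by
    have h1 := ha.2.2.1
    have h2 := r.2
    omega
  have ha' := (alive_encode t (c := ⟨c', hc'n⟩) (r := r)).1 ha
  obtain ⟨hsc', hsr, hcr', h4'⟩ := ha'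
  rcases t.cover ⟨c', hc'n⟩ r hsc' hsr hcr' with ⟨r₁, hle, hred⟩ | ⟨c₀, hge, hb⟩
  · exact absurd hle (not_le.2 (h4' r₁ hred))
  · have hlt : c < c₀ := by
      rw [Fin.lt_def]
      have h5 : c' ≤ (c₀ : ℕ) := hge
      omega
    have := t.no_dot_left_of_blue c₀ r c hb hlt
    rw [hblue] at this
    exact nomatch this

theorem CatAltTableau.ext' {n : ℕ} {t s : CatAltTableau n} (h1 : t.shape = s.shape)
    (h2 : t.dots = s.dots) : t = s := by
  cases t; cases s
  cases h1; cases h2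
  rfl

theorem tabOf_encode {n : ℕ} (t : CatAltTableau n) :
    tabOf n (encode t) (length_encode t) (goodK_encode t) = t := by
  apply CatAltTableau.ext'
  · funext i
    show decide ((encode t)[(i : ℕ)]? = some none) = t.shape i
    cases hs : t.shape i with
    | true => simp [(shape_iff_row t i).1 hs]
    | false =>
      rw [encode_get t i, if_neg (by rw [hs]; simp)]
      simp
  · funext c r
    show dotsOf (encode t) (c : ℕ) (r : ℕ) = t.dots c r
    cases hd : t.dots c r with
    | some b =>
      cases b with
      | true =>
        obtain ⟨hsc, hsr, hcr⟩ := t.dots_mem_cells c r (by rw [hd]; simp)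
        rw [dotsOf_red_iff]
        exact ⟨col_red t hd, Fin.lt_def.1 hcr⟩
      | false =>
        obtain ⟨hsc, hsr, hcr⟩ := t.dots_mem_cells c r (by rw [hd]; simp)
        rw [dotsOf_blue_iff]
        refine ⟨?_, ?_, max_alive t hd⟩
        · rintro ⟨h1, h2⟩
          obtain ⟨r₁, hred, hr₁⟩ := col_arc t c _ h1
          have : r₁ = r := Fin.ext (by omega)
          rw [this, hd] at hred
          exact absurd hred (by simp)
        · refine (alive_encode t).2 ⟨hsc, hsr, hcr, ?_⟩
          intro r₁ hred
          rcases lt_trichotomy r₁ r with h | h | h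
          · have := t.no_dot_below_red c r₁ r hred h
            rw [hd] at this
            exact absurd this (by simp)
          · rw [h, hd] at hred
            exact absurd hred (by simp)
          · exact h
    | none =>
      rw [dotsOf_none_iff]
      constructor
      · rintro ⟨h1, h2⟩
        obtain ⟨r₁, hred, hr₁⟩ := col_arc t c _ h1
        have : r₁ = r := Fin.ext (by omega)
        rw [this, hd] at hred
        exact nomatch hred
      · rintro ⟨halive, hmax⟩
        obtain ⟨hsc, hsr, hcr, h4⟩ := (alive_encode t).1 halive
        rcases t.cover c r hsc hsr hcr with ⟨r₁, hle, hred⟩ | ⟨c₀, hge, hb⟩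
        · exact absurd hle (not_le.2 (h4 r₁ hred))
        · rcases eq_or_lt_of_le hge with heq | hlt
          · rw [← heq, hd] at hb
            exact nomatch hb
          · have halive₀ : Alive (encode t) (c₀ : ℕ) (r : ℕ) := by
              obtain ⟨hsc₀, -, hc₀r⟩ := t.dots_mem_cells c₀ r (by rw [hb]; simp)
              refine (alive_encode t).2 ⟨hsc₀, hsr, hc₀r, ?_⟩
              intro r₁ hred₁
              rcases lt_trichotomy r₁ r with h | h | h
              · have := t.no_dot_below_red c₀ r₁ r hred₁ h
                rw [hb] at this
                exact absurd this (by simp)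
              · rw [h, hb] at hred₁
                exact absurd hred₁ (by simp)
              · exact h
            have := hmax (c₀ : ℕ) halive₀
            have := Fin.lt_def.1 hlt
            omega

theorem encode_tabOf (n : ℕ) (l : List Lam) (hn : l.length = n) (h : GoodK l) :
    encode (tabOf n l hn h) = l := by
  set t := tabOf n l hn h with ht
  apply List.ext_getElem?
  intro i
  by_cases hin : i < n
  · obtain ⟨v, hv⟩ : ∃ v, l[i]? = some v := ⟨_, List.getElem?_eq_getElem (by omega)⟩
    have hgi := encode_get t ⟨i, hin⟩
    rw [show ((⟨i, hin⟩ : Fin n) : ℕ) = i from rfl] at hgi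
    rw [hgi, hv]
    have hshape : t.shape ⟨i, hin⟩ = decide (l[i]? = some none) := rfl
    have hdots : ∀ c r : Fin n, t.dots c r = dotsOf l (c : ℕ) (r : ℕ) := fun _ _ => rfl
    rcases v with _ | e
    · rw [if_pos (by rw [hshape, hv]; simp)]
    · have hsf : t.shape ⟨i, hin⟩ = false := by rw [hshape, hv]; simp
      rw [if_neg (by rw [hsf]; simp)]
      rcases e with _ | d
      · have hfind : ((List.finRange n).find? fun r => t.dots ⟨i, hin⟩ r == some true)
            = none := by
          rw [List.find?_eq_none]
          intro r _ hbeq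
          have hred : t.dots ⟨i, hin⟩ r = some true := eq_of_beq hbeq
          rw [hdots, show ((⟨i, hin⟩ : Fin n) : ℕ) = i from rfl, dotsOf_red_iff] at hred
          obtain ⟨h1, -⟩ := hred
          rw [hv] at h1
          simp at h1
        rw [hfind]
        rfl
      · have htarget := (h i d hv).1
        have htn : i + d + 1 < n := by
          by_contra hc
          rw [List.getElem?_eq_none (by omega)] at htarget
          exact nomatch htarget
        have hred : t.dots ⟨i, hin⟩ ⟨i + d + 1, htn⟩ = some true := by
          rw [hdots, show ((⟨i, hin⟩ : Fin n) : ℕ) = i from rfl,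
            show ((⟨i + d + 1, htn⟩ : Fin n) : ℕ) = i + d + 1 from rfl,
            dotsOf_red_iff, isRed_iff hv]
        have hfind := (find?_red_iff t ⟨i, hin⟩ ⟨i + d + 1, htn⟩).2 hred
        rw [hfind, Option.map_some]
        simp only [Option.some.injEq]
        show (i + d + 1) - i - 1 = d
        omega
  · rw [encode_get_none t (by omega), List.getElem?_eq_none (by omega)]

/-- The number of Catalan alternative tableaux of size `n` is the Catalan number
`C_{n+1} = (1/(n+2)) * (2n+2).choose (n+1)` (stated multiplicatively). -/
theorem card_catAltTableau (n : ℕ) :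
    (n + 2) * Nat.card (CatAltTableau n) = (2 * n + 2).choose (n + 1) := by
  have hbij : Nat.card {l : List Lam // GoodK l ∧ l.length = n} = Nat.card (CatAltTableau n) := by
    apply Nat.card_eq_of_bijective (f := fun (x : {l : List Lam // GoodK l ∧ l.length = n}) =>
      tabOf n x.1 x.2.2 x.2.1)
    constructor
    · intro a b hab
      apply Subtype.ext
      have h3 : encode (tabOf n a.1 a.2.2 a.2.1) = encode (tabOf n b.1 b.2.2 b.2.1) :=
        congrArg encode hab
      rwa [encode_tabOf, encode_tabOf] at h3
    · intro t
      exact ⟨⟨encode t, goodK_encode t, length_encode t⟩, tabOf_encode t⟩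
  have hcard : Nat.card (CatAltTableau n) = catalan (n + 1) := by
    rw [← hbij, card_goodK n]
  rw [hcard]
  have h2 := succ_mul_catalan_eq_centralBinom (n + 1)
  rw [Nat.centralBinom] at h2
  rw [show 2 * n + 2 = 2 * (n + 1) by ring, ← h2]
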